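/- Let n ≥ 3 and let p(z) = z^n − z, whose zeros are z_1 = 0 and z_j = e^{2πi(j−2)/(n−1)} for 2 ≤ j ≤ n, and whose critical points are w_i = (1/n)^{1/(n−1)} e^{2πi(i−1)/(n−1)} for 1 ≤ i ≤ n−1. Define the (n−1)×n complex matrix A = (α_{ij}) by α_{i1} = −(n+1)/(n·w_i) and α_{ij} = w_i/(n·(w_i − z_j)²) for 2 ≤ j ≤ n. Then A is not positively singular. -/

import Mathlib

open Complex Polynomial

/-- The critical points `w_i = (1/n)^{1/(n-1)} e^{2πi(i-1)/(n-1)}`, `1 ≤ i ≤ n-1`,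
of `p(z) = z^n - z`, indexed by `Fin (n-1)`. -/
noncomputable def wpt (n : ℕ) (i : Fin (n - 1)) : ℂ :=
  ((((1 : ℝ) / n) ^ ((1 : ℝ) / ((n : ℝ) - 1)) : ℝ) : ℂ) *
    Complex.exp (2 * Real.pi * Complex.I * ((i : ℕ) : ℂ) / ((n : ℂ) - 1))

/-- The zeros `z_1 = 0`, `z_j = e^{2πi(j-2)/(n-1)}`, `2 ≤ j ≤ n`,
of `p(z) = z^n - z`, indexed by `Fin n`. -/
noncomputable def zpt (n : ℕ) (j : Fin n) : ℂ :=
  if (j : ℕ) = 0 then 0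
  else Complex.exp (2 * Real.pi * Complex.I * (((j : ℕ) : ℂ) - 1) / ((n : ℂ) - 1))

/-- The `(n-1) × n` matrix `A = (α_{ij})` with `α_{i1} = -(n+1)/(n w_i)` and
`α_{ij} = w_i / (n (w_i - z_j)²)` for `2 ≤ j ≤ n`. -/
noncomputable def Amat (n : ℕ) : Matrix (Fin (n - 1)) (Fin n) ℂ :=
  Matrix.of fun i j =>
    if (j : ℕ) = 0 then -((n : ℂ) + 1) / ((n : ℂ) * wpt n i)
    else wpt n i / ((n : ℂ) * (wpt n i - zpt n j) ^ 2)

/-- A complex `m × k` matrix is positively singular if there exist nonnegative reals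
`μ_1, …, μ_m`, not all zero, with `∑ i μ_i m_{ij} = 0` for every column `j`. -/
def PositivelySingular {m k : ℕ} (M : Matrix (Fin m) (Fin k) ℂ) : Prop :=
  ∃ μ : Fin m → ℝ, (∀ i, 0 ≤ μ i) ∧ (∃ i, μ i ≠ 0) ∧
    ∀ j, ∑ i, (μ i : ℂ) * M i j = 0

lemma sum_pow_prim {m : ℕ} {ω : ℂ} (hω : IsPrimitiveRoot ω m) (r : ℕ) :
    ∑ k ∈ Finset.range m, ω ^ (k * r) = if m ∣ r then (m : ℂ) else 0 := by
  have hpow : ∀ k, ω ^ (k * r) = (ω ^ r) ^ k := fun k => by rw [← pow_mul, mul_comm]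
  simp only [hpow]
  by_cases h : m ∣ r
  · rw [if_pos h, (hω.pow_eq_one_iff_dvd r).mpr h]; simp
  · rw [if_neg h]
    have h1 : ω ^ r ≠ 1 := fun hh => h ((hω.pow_eq_one_iff_dvd r).mp hh)
    rw [geom_sum_eq h1]
    have : (ω ^ r) ^ m = 1 := by
      rw [← pow_mul, mul_comm, pow_mul, hω.pow_eq_one, one_pow]
    rw [this]; simp

lemma key_sum {m : ℕ} (hm : 1 ≤ m) {ω w : ℂ} (hω : IsPrimitiveRoot ω m)
    (hw : w ^ m ≠ 1) :
    ∑ k ∈ Finset.range m, ω ^ k / (w - ω ^ k) ^ 2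
      = (m : ℂ) ^ 2 * w ^ (m - 1) / (w ^ m - 1) ^ 2 := by
  have hroot : ∀ k : ℕ, (ω ^ k) ^ m = 1 := fun k => by
    rw [← pow_mul, mul_comm, pow_mul, hω.pow_eq_one, one_pow]
  have hne : ∀ k, w - ω ^ k ≠ 0 := by
    intro k h
    exact hw ((sub_eq_zero.mp h) ▸ hroot k)
  have hq : w ^ m - 1 ≠ 0 := sub_ne_zero.mpr hw
  set S : ℕ → ℂ := fun k => ∑ t ∈ Finset.range m, w ^ t * (ω ^ k) ^ (m - 1 - t) with hS
  have hSk : ∀ k, S k * (w - ω ^ k) = w ^ m - 1 := by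
    intro k
    rw [hS]
    simp only
    rw [geom_sum₂_mul, hroot k]
  have hterm : ∀ k, ω ^ k / (w - ω ^ k) ^ 2 = ω ^ k * (S k) ^ 2 / (w ^ m - 1) ^ 2 := by
    intro k
    have hSne : S k ≠ 0 := fun h => hq (by rw [← hSk k, h, zero_mul])
    rw [← hSk k, mul_pow, mul_comm (ω ^ k), mul_div_mul_left _ _ (pow_ne_zero 2 hSne)]
  rw [Finset.sum_congr rfl (fun k _ => hterm k), ← Finset.sum_div]
  congr 1
  -- ∑ k, ω^k * (S k)^2 = m^2 * w^(m-1)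
  have expand : ∀ k ∈ Finset.range m, ω ^ k * (S k) ^ 2
      = ∑ s ∈ Finset.range m, ∑ t ∈ Finset.range m,
          w ^ (s + t) * ω ^ (k * ((m - 1 - s) + (m - 1 - t) + 1)) := by
    intro k _
    rw [hS]; simp only
    rw [sq, Finset.sum_mul_sum, Finset.mul_sum]
    refine Finset.sum_congr rfl fun s _ => ?_
    rw [Finset.mul_sum]
    refine Finset.sum_congr rfl fun t _ => ?_
    rw [mul_add, mul_add, pow_add, pow_add, pow_add, mul_one, pow_mul, pow_mul]
    ring
  rw [Finset.sum_congr rfl expand]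
  rw [Finset.sum_comm]
  have inner : ∀ s ∈ Finset.range m,
      (∑ k ∈ Finset.range m, ∑ t ∈ Finset.range m,
          w ^ (s + t) * ω ^ (k * ((m - 1 - s) + (m - 1 - t) + 1)))
      = w ^ (m - 1) * m := by
    intro s hs
    rw [Finset.mem_range] at hs
    rw [Finset.sum_comm]
    have inner2 : ∀ t ∈ Finset.range m,
        (∑ k ∈ Finset.range m, w ^ (s + t) * ω ^ (k * ((m - 1 - s) + (m - 1 - t) + 1)))
        = if t = m - 1 - s then w ^ (m - 1) * m else 0 := by
      intro t ht
      rw [Finset.mem_range] at ht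
      rw [← Finset.mul_sum, sum_pow_prim hω]
      by_cases hts : t = m - 1 - s
      · rw [if_pos hts]
        have he : (m - 1 - s) + (m - 1 - t) + 1 = m := by omega
        rw [he, if_pos dvd_rfl]
        have : s + t = m - 1 := by omega
        rw [this]
      · rw [if_neg hts]
        have : ¬ m ∣ ((m - 1 - s) + (m - 1 - t) + 1) := by
          rintro ⟨c, hc⟩
          have h1 : 1 ≤ m * c := by omega
          have h2 : m * c < 2 * m := by omega
          have hc2 : c < 2 := by
            by_contra hcc
            push_neg at hcc
            nlinarith
          interval_cases c <;> omega
        rw [if_neg this, mul_zero]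
    rw [Finset.sum_congr rfl inner2, Finset.sum_ite_eq' (Finset.range m)]
    rw [if_pos (Finset.mem_range.mpr (by omega : m - 1 - s < m))]
  rw [Finset.sum_congr rfl inner, Finset.sum_const, Finset.card_range]
  push_cast
  ring

set_option maxHeartbeats 1000000 in
lemma rowsum (n : ℕ) (hn : 3 ≤ n) (i : Fin (n - 1)) :
    ∑ j : Fin n, zpt n j * Amat n i j = 1 := by
  have hm0 : n - 1 ≠ 0 := by omega
  revert i
  set m := n - 1 with hmdef
  intro i
  have hcast : ((m : ℕ) : ℂ) = (n : ℂ) - 1 := by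
    rw [hmdef, Nat.cast_sub (by omega : 1 ≤ n), Nat.cast_one]
  have hcastR : ((m : ℕ) : ℝ) = (n : ℝ) - 1 := by
    rw [hmdef, Nat.cast_sub (by omega : 1 ≤ n), Nat.cast_one]
  set ω : ℂ := Complex.exp (2 * Real.pi * Complex.I / ((m : ℕ) : ℂ)) with hωdef
  have hω : IsPrimitiveRoot ω m := Complex.isPrimitiveRoot_exp m hm0
  have hωpow : ∀ k : ℕ, ω ^ k
      = Complex.exp (2 * Real.pi * Complex.I * (k : ℂ) / ((n : ℂ) - 1)) := by
    intro k
    rw [hωdef, ← Complex.exp_nat_mul]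
    congr 1
    rw [hcast]; ring
  set r : ℝ := ((1 : ℝ) / n) ^ ((1 : ℝ) / ((n : ℝ) - 1)) with hrdef
  have hnR : (0 : ℝ) < n := by exact_mod_cast (by omega : 0 < n)
  have hrpos : (0 : ℝ) < r := Real.rpow_pos_of_pos (by positivity) _
  have hrm : r ^ m = 1 / (n : ℝ) := by
    rw [hrdef, ← Real.rpow_natCast (((1:ℝ)/n) ^ ((1:ℝ)/((n:ℝ)-1))) m,
      ← Real.rpow_mul (by positivity)]
    have : (1 : ℝ) / ((n : ℝ) - 1) * (m : ℝ) = 1 := by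
      rw [hcastR]
      have : (n : ℝ) - 1 ≠ 0 := by
        intro h
        have : (n : ℝ) = 1 := by linarith
        have : n = 1 := by exact_mod_cast this
        omega
      field_simp
    rw [this, Real.rpow_one]
  set w : ℂ := wpt n i with hwdef
  have hwω : w = (r : ℂ) * ω ^ (i : ℕ) := by
    rw [hwdef, wpt, hωpow]
  have hwm : w ^ m = 1 / (n : ℂ) := by
    rw [hwω, mul_pow, ← pow_mul, mul_comm (i : ℕ) m, pow_mul, hω.pow_eq_one, one_pow,
      mul_one, ← Complex.ofReal_pow, hrm]
    push_cast
    ring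
  have hw0 : w ≠ 0 := by
    rw [hwω]
    exact mul_ne_zero (Complex.ofReal_ne_zero.mpr (ne_of_gt hrpos))
      (pow_ne_zero _ (Complex.exp_ne_zero _))
  have hn0 : (n : ℂ) ≠ 0 := Nat.cast_ne_zero.mpr (by omega)
  have hncne1 : (n : ℂ) ≠ 1 := by
    intro h
    have : n = 1 := by exact_mod_cast h
    omega
  have hwm1 : w ^ m ≠ 1 := by
    rw [hwm]
    intro h
    rw [div_eq_one_iff_eq hn0] at h
    exact hncne1 h.symm
  have hz : ∀ j : Fin n, (j : ℕ) ≠ 0 → zpt n j = ω ^ ((j : ℕ) - 1) := by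
    intro j hj
    rw [zpt, if_neg hj, hωpow]
    congr 2
    rw [Nat.cast_sub (by omega : 1 ≤ (j : ℕ)), Nat.cast_one]
  set F : ℕ → ℂ := fun jn =>
    if jn = 0 then 0 else ω ^ (jn - 1) * (w / ((n : ℂ) * (w - ω ^ (jn - 1)) ^ 2))
    with hFdef
  have hF : ∀ j : Fin n, zpt n j * Amat n i j = F (j : ℕ) := by
    intro j
    by_cases hj : (j : ℕ) = 0
    · simp [zpt, Amat, hFdef, hj]
    · rw [hFdef]
      simp only [if_neg hj]
      rw [Amat, Matrix.of_apply, if_neg hj, hz j hj, ← hwdef]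
  calc ∑ j : Fin n, zpt n j * Amat n i j = ∑ jn ∈ Finset.range n, F jn := by
        rw [← Fin.sum_univ_eq_sum_range F n]
        exact Finset.sum_congr rfl fun j _ => hF j
    _ = 1 := by
        rw [show n = m + 1 from by omega, Finset.sum_range_succ']
        have hF0 : F 0 = 0 := by simp [hFdef]
        have hFk : ∀ k, F (k + 1) = w / (n : ℂ) * (ω ^ k / (w - ω ^ k) ^ 2) := by
          intro k
          simp only [hFdef, Nat.add_sub_cancel]
          rw [if_neg (Nat.succ_ne_zero k)]
          simp only [div_eq_mul_inv, mul_inv]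
          ring
        rw [hF0, add_zero, Finset.sum_congr rfl fun k _ => hFk k, ← Finset.mul_sum,
          key_sum (by omega : 1 ≤ m) hω hwm1, hwm, hcast]
        have hrel : (n : ℂ) * (w * w ^ (m - 1)) = 1 := by
          rw [← pow_succ', show m - 1 + 1 = m from by omega, hwm]
          field_simp
        have hn1 : (n : ℂ) - 1 ≠ 0 := sub_ne_zero.mpr hncne1
        have h2 : ((1:ℂ)/(n:ℂ) - 1) ^ 2 = ((n:ℂ) - 1) ^ 2 / (n:ℂ) ^ 2 := by
          field_simp
          ring
        rw [h2]
        field_simp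
        linear_combination hrel

/-- For `p(z) = z^n - z`, `n ≥ 3`, the matrix `A(p)` is not positively singular. -/
theorem Amat_not_positivelySingular (n : ℕ) (hn : 3 ≤ n) :
    ¬ PositivelySingular (Amat n) := by
  rintro ⟨μ, hμ0, ⟨i0, hi0⟩, hcol⟩
  have key : ∑ i, (μ i : ℂ) = 0 := by
    calc ∑ i, (μ i : ℂ) = ∑ i, (μ i : ℂ) * ∑ j, zpt n j * Amat n i j := by
          refine Finset.sum_congr rfl fun i _ => ?_
          rw [rowsum n hn i, mul_one]
      _ = ∑ i, ∑ j, (μ i : ℂ) * (zpt n j * Amat n i j) := by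
          exact Finset.sum_congr rfl fun i _ => Finset.mul_sum _ _ _
      _ = ∑ j, ∑ i, (μ i : ℂ) * (zpt n j * Amat n i j) := Finset.sum_comm
      _ = ∑ j, zpt n j * ∑ i, (μ i : ℂ) * Amat n i j := by
          refine Finset.sum_congr rfl fun j _ => ?_
          rw [Finset.mul_sum]
          exact Finset.sum_congr rfl fun i _ => by ring
      _ = 0 := by
          refine Finset.sum_eq_zero fun j _ => ?_
          rw [hcol j, mul_zero]
  have keyR : ∑ i, μ i = 0 := by exact_mod_cast key
  have hall := (Finset.sum_eq_zero_iff_of_nonneg (fun i _ => hμ0 i)).mp keyR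
  exact hi0 (hall i0 (Finset.mem_univ i0))
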